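/- Every WM-identifiable finite simple graph is CR-identifiable: if an n-vertex graph G has the property that every n-vertex graph H admitting a bijection f from V(G) to V(H) with w_k^G(x) = w_k^H(f(x)) for all x and all 0 ≤ k < n is isomorphic to G, then color refinement distinguishes G from every graph not isomorphic to G. -/

import Mathlib

/-- The type of colors produced after `k` rounds of color refinement. -/
def CRColor : ℕ → Type
  | 0 => Unit
  | k + 1 => CRColor k × Multiset (CRColor k)

/-- The color refinement coloring after `k` rounds: `C 0` is constant, and
`C (k+1) x = (C k x, {{C k y : y ∈ N(x)}})`. -/
noncomputable def crColoring {V : Type*} [Fintype V] (G : SimpleGraph V) :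
    (k : ℕ) → V → CRColor k
  | 0 => fun _ => ()
  | k + 1 => fun x =>
      (crColoring G k x, ((G.neighborSet x).toFinite.toFinset.val).map (crColoring G k))

/-- `walkCount G k x` is the number of walks of length `k` in `G` starting at `x`. -/
noncomputable def walkCount {V : Type*} (G : SimpleGraph V) (k : ℕ) (x : V) : ℕ :=
  Nat.card {p : (y : V) × G.Walk x y // p.2.length = k}

/-- Color refinement, run on the disjoint union of `G` and `H`, distinguishes `G`
and `H`: for some `k` the multisets of `C_k`-colors on the two sides differ. -/
noncomputable def crDistinguishes {α β : Type} [Fintype α] [Fintype β]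
    (G : SimpleGraph α) (H : SimpleGraph β) : Prop :=
  ∃ k : ℕ,
    (Finset.univ : Finset α).val.map (fun x => crColoring (G ⊕g H) k (Sum.inl x)) ≠
    (Finset.univ : Finset β).val.map (fun y => crColoring (G ⊕g H) k (Sum.inr y))

/-! ### Auxiliary definitions -/

/-- Number of walks determined by a CR color. -/
noncomputable def numWalks : (k : ℕ) → CRColor k → ℕ
  | 0, _ => 1
  | k + 1, c => (c.2.map (numWalks k)).sum

lemma walkCount_zero {V : Type*} (G : SimpleGraph V) (x : V) : walkCount G 0 x = 1 := by
  have e : {p : (y : V) × G.Walk x y // p.2.length = 0} ≃ Unit := by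
    refine ⟨fun _ => (), fun _ => ⟨⟨x, .nil⟩, rfl⟩, ?_, fun _ => rfl⟩
    rintro ⟨⟨y, w⟩, hw⟩
    cases w with
    | nil => rfl
    | cons h p => simp at hw
  rw [walkCount, Nat.card_congr e, Nat.card_unique]

/-- A walk of length `k+1` is a neighbor plus a walk of length `k`. -/
def consEquiv {V : Type*} (G : SimpleGraph V) (x : V) (k : ℕ) :
    {p : (y : V) × G.Walk x y // p.2.length = k + 1} ≃
      Σ y : G.neighborSet x, {p : (z : V) × G.Walk (y : V) z // p.2.length = k} where
  toFun := fun ⟨⟨z, w⟩, hw⟩ =>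
    match w, hw with
    | .cons a w', hw => ⟨⟨_, a⟩, ⟨⟨z, w'⟩, by simpa using hw⟩⟩
  invFun := fun ⟨⟨y, hy⟩, ⟨⟨z, w⟩, hw⟩⟩ => ⟨⟨z, .cons hy w⟩, congrArg (· + 1) hw⟩
  left_inv := by
    rintro ⟨⟨z, w⟩, hw⟩
    cases w with
    | nil => simp at hw
    | cons a w' => rfl
  right_inv := by rintro ⟨⟨y, hy⟩, ⟨⟨z, w⟩, hw⟩⟩; rfl

/-- Subtype of a sigma by a predicate on both components. -/
def sigmaSubtypeEquiv' {α : Type*} {β : α → Type*} (q : ∀ a, β a → Prop) :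
    {p : Σ a, β a // q p.1 p.2} ≃ Σ a, {b : β a // q a b} where
  toFun := fun ⟨⟨a, b⟩, h⟩ => ⟨a, b, h⟩
  invFun := fun ⟨a, b, h⟩ => ⟨⟨a, b⟩, h⟩
  left_inv := fun ⟨⟨a, b⟩, h⟩ => rfl
  right_inv := fun ⟨a, b, h⟩ => rfl

lemma walkCount_succ {V : Type*} [Fintype V] (G : SimpleGraph V) (k : ℕ) (x : V) :
    walkCount G (k + 1) x =
      ∑ y ∈ (G.neighborSet x).toFinite.toFinset, walkCount G k y := by
  classical
  haveI : G.LocallyFinite := fun v => (G.neighborSet v).toFinite.fintype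
  haveI F1 : ∀ (y : V) (m : ℕ), Fintype {p : (z : V) × G.Walk y z // p.2.length = m} :=
    fun y m => Fintype.ofEquiv _ (sigmaSubtypeEquiv' (fun z (w : G.Walk y z) => w.length = m)).symm
  rw [walkCount, Nat.card_congr (consEquiv G x k), Nat.card_eq_fintype_card,
    Fintype.card_sigma]
  have h1 : ∀ y : G.neighborSet x,
      Fintype.card {p : (z : V) × G.Walk (y : V) z // p.2.length = k} = walkCount G k (y : V) :=
    fun y => (Nat.card_eq_fintype_card).symm
  rw [Finset.sum_congr rfl (fun y _ => h1 y)]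
  rw [← Finset.sum_coe_sort ((G.neighborSet x).toFinite.toFinset) (walkCount G k)]
  exact Fintype.sum_equiv (Equiv.subtypeEquivRight (by simp)) _ _ (fun _ => rfl)

lemma walkCount_eq_numWalks {V W : Type*} [Fintype V] [Fintype W]
    (G : SimpleGraph V) (F : SimpleGraph W) (ψ : V → W) (hinj : Function.Injective ψ)
    (hadj : ∀ a b, F.Adj (ψ a) (ψ b) ↔ G.Adj a b)
    (hnbr : ∀ x, F.neighborSet (ψ x) ⊆ Set.range ψ) :
    ∀ (k : ℕ) (x : V), walkCount G k x = numWalks k (crColoring F k (ψ x)) := by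
  intro k
  induction k with
  | zero => intro x; rw [walkCount_zero]; rfl
  | succ k ih =>
    intro x
    have hset : F.neighborSet (ψ x) = ψ '' G.neighborSet x := by
      ext w
      constructor
      · intro hw
        obtain ⟨b, rfl⟩ := hnbr x hw
        exact ⟨b, (hadj x b).mp hw, rfl⟩
      · rintro ⟨b, hb, rfl⟩
        exact (hadj x b).mpr hb
    have hfin : (F.neighborSet (ψ x)).toFinite.toFinset
        = (G.neighborSet x).toFinite.toFinset.map ⟨ψ, hinj⟩ := by
      ext w
      simp [hset]
    have key : numWalks (k+1) (crColoring F (k+1) (ψ x))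
        = ∑ y ∈ (G.neighborSet x).toFinite.toFinset, numWalks k (crColoring F k (ψ y)) := by
      show ((((F.neighborSet (ψ x)).toFinite.toFinset.val).map (crColoring F k)).map
        (numWalks k)).sum = _
      rw [hfin, Finset.map_val, Multiset.map_map, Multiset.map_map]
      rfl
    rw [key, walkCount_succ]
    exact Finset.sum_congr rfl (fun y _ => ih y)

lemma crColoring_of_le {V : Type*} [Fintype V] (F : SimpleGraph V) :
    ∀ k j, j ≤ k → ∀ x y : V, crColoring F k x = crColoring F k y →
      crColoring F j x = crColoring F j y := by
  intro k
  induction k with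
  | zero => intro j hj x y h; obtain rfl := Nat.le_zero.mp hj; exact h
  | succ k ih =>
    intro j hj x y h
    rcases Nat.eq_or_lt_of_le hj with rfl | hj'
    · exact h
    · exact ih j (Nat.lt_succ_iff.mp hj') x y
        (congrArg (fun c : CRColor k × Multiset (CRColor k) => c.1) h)

lemma exists_equiv_of_multiset_map_eq {α β : Type*} [Fintype α] [Fintype β] {γ : Type*}
    {f : α → γ} {g : β → γ}
    (h : (Finset.univ : Finset α).val.map f = (Finset.univ : Finset β).val.map g) :
    ∃ e : α ≃ β, ∀ x, f x = g (e x) := by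
  classical
  have hcard : ∀ c : γ, Fintype.card {a // f a = c} = Fintype.card {b // g b = c} := by
    intro c
    have hc := congrArg (Multiset.count c) h
    rw [Multiset.count_map, Multiset.count_map] at hc
    rw [Fintype.card_subtype, Fintype.card_subtype]
    simpa [Finset.card, Finset.filter, eq_comm] using hc
  refine ⟨Equiv.ofFiberEquiv (fun c => Fintype.equivOfCardEq (hcard c)), fun x => ?_⟩
  exact (Equiv.ofFiberEquiv_map _ x).symm

/-- Every WM-identifiable graph is CR-identifiable. -/
theorem WMidentifiable_implies_CRidentifiable (n : ℕ) (G : SimpleGraph (Fin n))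
    (hWM : ∀ H : SimpleGraph (Fin n),
      (∃ f : Fin n ≃ Fin n, ∀ x : Fin n, ∀ k < n, walkCount G k x = walkCount H k (f x)) →
      Nonempty (G ≃g H)) :
    ∀ (β : Type) (_ : Fintype β) (H : SimpleGraph β),
      ¬ Nonempty (G ≃g H) → crDistinguishes G H := by
  intro β hβ H hno
  by_contra hcr
  rw [crDistinguishes] at hcr
  push_neg at hcr
  classical
  obtain ⟨e, he⟩ := exists_equiv_of_multiset_map_eq (hcr n)
  have hnbrl : ∀ x : Fin n, (G ⊕g H).neighborSet (Sum.inl x) ⊆ Set.range Sum.inl := by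
    intro x w hw
    cases w with
    | inl a => exact ⟨a, rfl⟩
    | inr b => simp [SimpleGraph.neighborSet] at hw
  have hnbrr : ∀ y : β, (G ⊕g H).neighborSet (Sum.inr y) ⊆ Set.range Sum.inr := by
    intro y w hw
    cases w with
    | inl a => simp [SimpleGraph.neighborSet] at hw
    | inr b => exact ⟨b, rfl⟩
  have hG := walkCount_eq_numWalks G (G ⊕g H) Sum.inl Sum.inl_injective (by simp) hnbrl
  have hH := walkCount_eq_numWalks H (G ⊕g H) Sum.inr Sum.inr_injective (by simp) hnbrr
  have hwalk : ∀ x : Fin n, ∀ k ≤ n, walkCount G k x = walkCount H k (e x) := by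
    intro x k hk
    rw [hG k x, hH k (e x),
      crColoring_of_le (G ⊕g H) n k hk (Sum.inl x) (Sum.inr (e x)) (he x)]
  -- transport H to Fin n
  let H' : SimpleGraph (Fin n) := H.comap e
  have hiso : H' ≃g H := ⟨e, Iff.rfl⟩
  have hH' : ∀ (k : ℕ) (x : Fin n), walkCount H' k x = walkCount H k (e x) := by
    intro k x
    rw [walkCount_eq_numWalks H' H e e.injective (fun a b => Iff.rfl)
      (fun a w _ => e.surjective w) k x]
    exact (walkCount_eq_numWalks H H id (fun a b h => h) (fun a b => Iff.rfl)
      (fun a w _ => ⟨w, rfl⟩) k (e x)).symm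
  have : Nonempty (G ≃g H') := by
    refine hWM H' ⟨Equiv.refl (Fin n), fun x k hk => ?_⟩
    rw [Equiv.refl_apply, hH' k x]
    exact hwalk x k (le_of_lt hk)
  exact hno ⟨this.some.trans hiso⟩
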